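/- (Proposition 1, uplink bound) For any fixed point q_l ∈ ℝ², user location s ∈ ℝ², altitude H > 0, bandwidth fraction α > 0, and ε = Pᵘγ₀/α > 0, the rate lower bound holds for all q ∈ ℝ²: α·log₂(1 + ε/(H² + ‖q - s‖²)) ≥ α·log₂(1 + ε/(H² + ‖q_l - s‖²)) - φ·(‖q - s‖² - ‖q_l - s‖²), where φ = α·(log₂ e)·ε / ((H² + ‖q_l - s‖²)·(H² + ‖q_l - s‖² + ε)). Moreover, equality holds when q = q_l. -/

import Mathlib

lemma core_log (ε x y : ℝ) (hε : 0 < ε) (hx : 0 < x) (hy : 0 < y) :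
    Real.log (1 + ε / y) - Real.log (1 + ε / x) ≤ ε / (y * (y + ε)) * (x - y) := by
  have hx' : (0:ℝ) < 1 + ε / x := by positivity
  have hy' : (0:ℝ) < 1 + ε / y := by positivity
  have ht : (0:ℝ) < (1 + ε / y) / (1 + ε / x) := by positivity
  have h := Real.log_le_sub_one_of_pos ht
  rw [Real.log_div hy'.ne' hx'.ne'] at h
  refine h.trans ?_
  rw [div_sub_one hx'.ne', div_le_iff₀ hx']
  have h1 : (0:ℝ) < y * (y + ε) := by positivity
  rw [div_mul_eq_mul_div, div_mul_eq_mul_div, le_div_iff₀ h1]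
  have hxne := hx.ne'
  have hyne := hy.ne'
  field_simp
  nlinarith [mul_nonneg hε.le (sq_nonneg (x - y)), sq_nonneg (x - y), mul_pos hx hy, mul_pos hε (mul_pos hx hy), sq_nonneg (x*y - y*y)]

/-- (Proposition 1, uplink bound) For any fixed q_l, user location s, altitude H > 0,
bandwidth fraction α > 0 and ε > 0, for all q:
α·log₂(1 + ε/(H² + ‖q-s‖²)) ≥ α·log₂(1 + ε/(H² + ‖q_l-s‖²)) - φ·(‖q-s‖² - ‖q_l-s‖²),
with φ = α·(log₂ e)·ε/((H²+‖q_l-s‖²)(H²+‖q_l-s‖²+ε)); equality holds at q = q_l. -/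
theorem stmt_11 (H α ε : ℝ) (hH : 0 < H) (hα : 0 < α) (hε : 0 < ε)
    (ql s : EuclideanSpace ℝ (Fin 2)) :
    (∀ q : EuclideanSpace ℝ (Fin 2),
      α * Real.logb 2 (1 + ε / (H ^ 2 + ‖q - s‖ ^ 2)) ≥
        α * Real.logb 2 (1 + ε / (H ^ 2 + ‖ql - s‖ ^ 2)) -
          (α * (1 / Real.log 2) * ε /
              ((H ^ 2 + ‖ql - s‖ ^ 2) * (H ^ 2 + ‖ql - s‖ ^ 2 + ε))) *
            (‖q - s‖ ^ 2 - ‖ql - s‖ ^ 2)) ∧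
    α * Real.logb 2 (1 + ε / (H ^ 2 + ‖ql - s‖ ^ 2)) =
      α * Real.logb 2 (1 + ε / (H ^ 2 + ‖ql - s‖ ^ 2)) -
        (α * (1 / Real.log 2) * ε /
            ((H ^ 2 + ‖ql - s‖ ^ 2) * (H ^ 2 + ‖ql - s‖ ^ 2 + ε))) *
          (‖ql - s‖ ^ 2 - ‖ql - s‖ ^ 2) := by
  constructor
  · intro q
    set x := H ^ 2 + ‖q - s‖ ^ 2 with hxdef
    set y := H ^ 2 + ‖ql - s‖ ^ 2 with hydef
    have hx : 0 < x := by positivity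
    have hy : 0 < y := by positivity
    have hlog2 : (0:ℝ) < Real.log 2 := Real.log_pos (by norm_num)
    have hcore := core_log ε x y hε hx hy
    rw [ge_iff_le, sub_le_iff_le_add]
    have h1 : Real.logb 2 (1 + ε / y) - Real.logb 2 (1 + ε / x) ≤
        (1 / Real.log 2) * (ε / (y * (y + ε)) * (x - y)) := by
      unfold Real.logb
      rw [div_sub_div_same, div_le_iff₀ hlog2]
      calc Real.log (1 + ε / y) - Real.log (1 + ε / x) ≤ ε / (y * (y + ε)) * (x - y) := hcore
        _ = 1 / Real.log 2 * (ε / (y * (y + ε)) * (x - y)) * Real.log 2 := by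
            field_simp
    have hxy : ‖q - s‖ ^ 2 - ‖ql - s‖ ^ 2 = x - y := by rw [hxdef, hydef]; ring
    rw [hxy]
    have heq : α * (1 / Real.log 2) * ε / (y * (y + ε)) * (x - y) =
        α * (1 / Real.log 2 * (ε / (y * (y + ε)) * (x - y))) := by ring
    have h2 := mul_le_mul_of_nonneg_left h1 hα.le
    linarith [h2, heq.le, heq.ge]
  · ring
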